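/- arXiv:2112.03231 — 4 statements merged into one kernel-verified Lean document; each statement's English description precedes it below -/
import Mathlib

section
/- Let p'_1,…,p'_k be nonnegative reals with ∑_{i=1}^{k} p'_i = 1, and suppose X_1,…,X_n are i.i.d. with P(X_j = i) = p'_i for 1 ≤ i ≤ k, while the statistics S_{n1} and S_{n2} are built from the reference probabilities p_1,…,p_k. Then E[S_{n1}] − (k − 1) = (n − 1) ∑_{i=1}^{k} (p'_i − p_i)²/p_i and E[S_{n2}] = ∑_{i=1}^{k} (p'_i − p_i)/p_i. In particular, when p'_i = p_i for all i, E[S_{n1}] = k − 1 and E[S_{n2}] = 0. -/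
open MeasureTheory ProbabilityTheory Filter Finset Real

/-- The cumulative distribution function of the standard normal distribution:
`Φ(x) = (2π)^{-1/2} ∫_{-∞}^x e^{-t²/2} dt`. -/
noncomputable def stdNormalCDF (x : ℝ) : ℝ :=
  (Real.sqrt (2 * Real.pi))⁻¹ * ∫ t in Set.Iic x, Real.exp (-t ^ 2 / 2)

/-- Observed count `o_i` of cell `i` among the draws `X 0, …, X (n-1)` (as a real number). -/
noncomputable def obsCount {Ω : Type*} (n : ℕ) (X : ℕ → Ω → ℕ) (i : ℕ) (ω : Ω) : ℝ :=
  (((Finset.range n).filter (fun j => X j ω = i)).card : ℝ)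

/-- Pearson's chi-squared statistic `𝒳²_n = ∑_{i=1}^{k} (o_i - n p_i)² / (n p_i)`. -/
noncomputable def chiSqStat {Ω : Type*} (n kn : ℕ) (p : ℕ → ℝ) (X : ℕ → Ω → ℕ) (ω : Ω) : ℝ :=
  ∑ i ∈ Finset.Icc 1 kn, (obsCount n X i ω - n * p i) ^ 2 / (n * p i)

/-- `S_{n2} = ∑_{i=1}^{k} (o_i - n p_i) / (n p_i)`. -/
noncomputable def S2stat {Ω : Type*} (n kn : ℕ) (p : ℕ → ℝ) (X : ℕ → Ω → ℕ) (ω : Ω) : ℝ :=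
  ∑ i ∈ Finset.Icc 1 kn, (obsCount n X i ω - n * p i) / (n * p i)

/-- `S_{n1} = 𝒳²_n - S_{n2}`. -/
noncomputable def S1stat {Ω : Type*} (n kn : ℕ) (p : ℕ → ℝ) (X : ℕ → Ω → ℕ) (ω : Ω) : ℝ :=
  chiSqStat n kn p X ω - S2stat n kn p X ω

/-- `σ_{n1}² = 2(k_n - 1)(n - 1)/n`. -/
noncomputable def sigma1sq (n kn : ℕ) : ℝ :=
  2 * ((kn : ℝ) - 1) * ((n : ℝ) - 1) / (n : ℝ)

/-- `σ_{n2}² = (1/n)(∑_{i=1}^{k} 1/p_i - k²)`. -/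
noncomputable def sigma2sq (n kn : ℕ) (p : ℕ → ℝ) : ℝ :=
  (1 / (n : ℝ)) * (∑ i ∈ Finset.Icc 1 kn, 1 / p i - (kn : ℝ) ^ 2)

theorem obsCount_eq_sum {Ω : Type*} (n : ℕ) (X : ℕ → Ω → ℕ) (i : ℕ) (ω : Ω) :
    obsCount n X i ω = ∑ j ∈ Finset.range n, (X j ⁻¹' {i}).indicator (fun _ => (1:ℝ)) ω := by
  classical
  rw [obsCount, Finset.card_filter]
  push_cast
  refine Finset.sum_congr rfl fun j _ => ?_
  rw [Set.indicator_apply]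
  simp only [Set.mem_preimage, Set.mem_singleton_iff]

theorem S1_S2_mean_under_alternative
    {Ω : Type*} [MeasurableSpace Ω] (P : Measure Ω) [IsProbabilityMeasure P]
    (n k : ℕ) (hn : 1 ≤ n) (hk : 2 ≤ k)
    (p p' : ℕ → ℝ)
    (hp_pos : ∀ i ∈ Finset.Icc 1 k, 0 < p i)
    (hp_sum : ∑ i ∈ Finset.Icc 1 k, p i = 1)
    (hp'_nonneg : ∀ i ∈ Finset.Icc 1 k, 0 ≤ p' i)
    (hp'_sum : ∑ i ∈ Finset.Icc 1 k, p' i = 1)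
    (X : ℕ → Ω → ℕ)
    (hX_meas : ∀ j, Measurable (X j))
    (hX_range : ∀ j < n, ∀ ω, X j ω ∈ Finset.Icc 1 k)
    (hX_indep : iIndepFun (m := fun _ : Fin n => (inferInstance : MeasurableSpace ℕ))
      (fun j : Fin n => X j.1) P)
    (hX_dist : ∀ j < n, ∀ i ∈ Finset.Icc 1 k,
      P {ω | X j ω = i} = ENNReal.ofReal (p' i)) :
    (∫ ω, S1stat n k p X ω ∂P) - ((k : ℝ) - 1) =
        ((n : ℝ) - 1) * ∑ i ∈ Finset.Icc 1 k, (p' i - p i) ^ 2 / p i ∧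
    (∫ ω, S2stat n k p X ω ∂P) = ∑ i ∈ Finset.Icc 1 k, (p' i - p i) / p i ∧
    ((∀ i ∈ Finset.Icc 1 k, p' i = p i) →
      (∫ ω, S1stat n k p X ω ∂P) = (k : ℝ) - 1 ∧ (∫ ω, S2stat n k p X ω ∂P) = 0) := by
  
  classical
  have hn0 : (n:ℝ) ≠ 0 := by positivity
  set A : ℕ → ℕ → Set Ω := fun j i => X j ⁻¹' {i} with hA
  have hA_meas : ∀ j i, MeasurableSet (A j i) := fun j i => hX_meas j (measurableSet_singleton i)
  have hPA : ∀ j < n, ∀ i ∈ Finset.Icc 1 k, (P (A j i)).toReal = p' i := by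
    intro j hj i hi
    have h1 : A j i = {ω | X j ω = i} := by ext ω; simp [hA]
    rw [h1, hX_dist j hj i hi, ENNReal.toReal_ofReal (hp'_nonneg i hi)]
  have hint : ∀ j i, Integrable ((A j i).indicator (fun _ => (1:ℝ))) P := fun j i =>
    (integrable_indicator_iff (hA_meas j i)).2 (integrableOn_const (measure_ne_top P _))
  have hEind : ∀ j < n, ∀ i ∈ Finset.Icc 1 k,
      ∫ ω, (A j i).indicator (fun _ => (1:ℝ)) ω ∂P = p' i := by
    intro j hj i hi
    rw [integral_indicator_const (1:ℝ) (hA_meas j i), smul_eq_mul, mul_one, measureReal_def, hPA j hj i hi]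
  have hprod : ∀ j l i, (fun ω => (A j i).indicator (fun _ => (1:ℝ)) ω *
      (A l i).indicator (fun _ => (1:ℝ)) ω) = (A j i ∩ A l i).indicator (fun _ => (1:ℝ)) := by
    intro j l i
    funext ω
    by_cases h1 : ω ∈ A j i <;> by_cases h2 : ω ∈ A l i <;>
      simp [Set.indicator_apply, h1, h2]
  have hintprod : ∀ j l i, Integrable (fun ω => (A j i).indicator (fun _ => (1:ℝ)) ω *
      (A l i).indicator (fun _ => (1:ℝ)) ω) P := by
    intro j l i
    rw [hprod]
    exact (integrable_indicator_iff ((hA_meas j i).inter (hA_meas l i))).2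
      (integrableOn_const (measure_ne_top P _))
  have hEprod : ∀ j < n, ∀ l < n, j ≠ l → ∀ i ∈ Finset.Icc 1 k,
      ∫ ω, (A j i).indicator (fun _ => (1:ℝ)) ω * (A l i).indicator (fun _ => (1:ℝ)) ω ∂P
        = p' i * p' i := by
    intro j hj l hl hjl i hi
    rw [hprod, integral_indicator_const (1:ℝ) ((hA_meas j i).inter (hA_meas l i)),
      smul_eq_mul, mul_one]
    have hind : IndepFun (X j) (X l) P :=
      hX_indep.indepFun (i := ⟨j, hj⟩) (j := ⟨l, hl⟩) (by simpa [Fin.ext_iff] using hjl)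
    have hmeasmul := hind.measure_inter_preimage_eq_mul {i} {i}
      (measurableSet_singleton i) (measurableSet_singleton i)
    have : P (A j i ∩ A l i) = P (A j i) * P (A l i) := hmeasmul
    rw [measureReal_def, this, ENNReal.toReal_mul, hPA j hj i hi, hPA l hl i hi]
  -- integrability and moments of obsCount
  have hobs_eq : ∀ i, obsCount n X i =
      fun ω => ∑ j ∈ Finset.range n, (A j i).indicator (fun _ => (1:ℝ)) ω :=
    fun i => funext fun ω => obsCount_eq_sum n X i ω
  have hIobs : ∀ i, Integrable (obsCount n X i) P := by
    intro i
    rw [hobs_eq i]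
    exact integrable_finset_sum _ (fun j _ => hint j i)
  have hEobs : ∀ i ∈ Finset.Icc 1 k, ∫ ω, obsCount n X i ω ∂P = n * p' i := by
    intro i hi
    rw [hobs_eq i, integral_finset_sum _ (fun j _ => hint j i),
      Finset.sum_congr rfl (fun j hj => hEind j (Finset.mem_range.1 hj) i hi),
      Finset.sum_const, Finset.card_range, nsmul_eq_mul]
  have hsq_eq : ∀ i, (fun ω => obsCount n X i ω ^ 2) =
      fun ω => ∑ j ∈ Finset.range n, ∑ l ∈ Finset.range n,
        (A j i).indicator (fun _ => (1:ℝ)) ω * (A l i).indicator (fun _ => (1:ℝ)) ω := by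
    intro i
    funext ω
    rw [obsCount_eq_sum, sq, Finset.sum_mul_sum]
  have hIobs2 : ∀ i, Integrable (fun ω => obsCount n X i ω ^ 2) P := by
    intro i
    rw [hsq_eq i]
    exact integrable_finset_sum _ (fun j _ => integrable_finset_sum _ (fun l _ => hintprod j l i))
  have hEobs2 : ∀ i ∈ Finset.Icc 1 k,
      ∫ ω, obsCount n X i ω ^ 2 ∂P = n * p' i + n * ((n:ℝ) - 1) * p' i ^ 2 := by
    intro i hi
    rw [hsq_eq i, integral_finset_sum _
      (fun j _ => integrable_finset_sum _ (fun l _ => hintprod j l i))]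
    have hinner : ∀ j ∈ Finset.range n,
        ∫ ω, ∑ l ∈ Finset.range n, (A j i).indicator (fun _ => (1:ℝ)) ω *
          (A l i).indicator (fun _ => (1:ℝ)) ω ∂P = p' i + ((n:ℝ) - 1) * p' i ^ 2 := by
      intro j hj
      have hjn := Finset.mem_range.1 hj
      rw [integral_finset_sum _ (fun l _ => hintprod j l i)]
      rw [← Finset.add_sum_erase _ _ hj]
      have hdiag : ∫ ω, (A j i).indicator (fun _ => (1:ℝ)) ω *
          (A j i).indicator (fun _ => (1:ℝ)) ω ∂P = p' i := by
        rw [hprod, Set.inter_self, integral_indicator_const (1:ℝ) (hA_meas j i),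
          smul_eq_mul, mul_one, measureReal_def, hPA j hjn i hi]
      have hoff : ∀ l ∈ (Finset.range n).erase j,
          ∫ ω, (A j i).indicator (fun _ => (1:ℝ)) ω *
            (A l i).indicator (fun _ => (1:ℝ)) ω ∂P = p' i ^ 2 := by
        intro l hl
        have hln := Finset.mem_range.1 (Finset.mem_of_mem_erase hl)
        have hne : j ≠ l := (Finset.ne_of_mem_erase hl).symm
        rw [hEprod j hjn l hln hne i hi, sq]
      rw [hdiag, Finset.sum_congr rfl hoff, Finset.sum_const,
        Finset.card_erase_of_mem hj, Finset.card_range, nsmul_eq_mul]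
      rw [Nat.cast_sub hn]
      norm_num
    rw [Finset.sum_congr rfl hinner, Finset.sum_const, Finset.card_range, nsmul_eq_mul]
    ring
  -- S2 per-term
  have hIg2 : ∀ i, Integrable (fun ω => (obsCount n X i ω - n * p i) / (n * p i)) P := by
    intro i
    exact ((hIobs i).sub (integrable_const _)).div_const _
  have hEg2 : ∀ i ∈ Finset.Icc 1 k,
      ∫ ω, (obsCount n X i ω - n * p i) / (n * p i) ∂P = (p' i - p i) / p i := by
    intro i hi
    rw [integral_div, integral_sub (hIobs i) (integrable_const _), hEobs i hi,
      integral_const, smul_eq_mul]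
    simp only [probReal_univ, measure_univ, ENNReal.toReal_one, one_mul]
    have hpi : p i ≠ 0 := (hp_pos i hi).ne'
    field_simp
  -- chiSq per-term
  have hg1_eq : ∀ i, (fun ω => (obsCount n X i ω - n * p i) ^ 2 / (n * p i)) =
      fun ω => (obsCount n X i ω ^ 2 - 2 * (n * p i) * obsCount n X i ω + (n * p i) ^ 2)
        / (n * p i) := by
    intro i; funext ω; ring_nf
  have hIg1 : ∀ i, Integrable (fun ω => (obsCount n X i ω - n * p i) ^ 2 / (n * p i)) P := by
    intro i
    rw [hg1_eq i]
    exact (((hIobs2 i).sub ((hIobs i).const_mul _)).add (integrable_const _)).div_const _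
  have hEg1 : ∀ i ∈ Finset.Icc 1 k,
      ∫ ω, (obsCount n X i ω - n * p i) ^ 2 / (n * p i) ∂P
        = (n-1) * (p' i - p i)^2 / p i + (p' i - p i) / p i + (1 + p i - 2 * p' i) := by
    intro i hi
    have hpi : p i ≠ 0 := (hp_pos i hi).ne'
    have h1 : Integrable (fun a => obsCount n X i a ^ 2
        - 2 * ((n:ℝ) * p i) * obsCount n X i a) P := (hIobs2 i).sub ((hIobs i).const_mul _)
    rw [hg1_eq i, integral_div, integral_add h1 (integrable_const _),
      integral_sub (hIobs2 i) ((hIobs i).const_mul _), hEobs2 i hi,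
      integral_const_mul, hEobs i hi, integral_const, smul_eq_mul]
    simp only [probReal_univ, measure_univ, ENNReal.toReal_one, one_mul]
    field_simp
    ring
  -- Integrals of the statistics
  have hES2 : ∫ ω, S2stat n k p X ω ∂P = ∑ i ∈ Finset.Icc 1 k, (p' i - p i) / p i := by
    rw [show (fun ω => S2stat n k p X ω) = fun ω => ∑ i ∈ Finset.Icc 1 k,
      (obsCount n X i ω - n * p i) / (n * p i) from rfl]
    rw [integral_finset_sum _ (fun i _ => hIg2 i)]
    exact Finset.sum_congr rfl hEg2
  have hEchi : ∫ ω, chiSqStat n k p X ω ∂P = ∑ i ∈ Finset.Icc 1 k,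
      ((n-1) * (p' i - p i)^2 / p i + (p' i - p i) / p i + (1 + p i - 2 * p' i)) := by
    rw [show (fun ω => chiSqStat n k p X ω) = fun ω => ∑ i ∈ Finset.Icc 1 k,
      (obsCount n X i ω - n * p i) ^ 2 / (n * p i) from rfl]
    rw [integral_finset_sum _ (fun i _ => hIg1 i)]
    exact Finset.sum_congr rfl hEg1
  have hES1 : ∫ ω, S1stat n k p X ω ∂P =
      ((n:ℝ) - 1) * ∑ i ∈ Finset.Icc 1 k, (p' i - p i) ^ 2 / p i + ((k:ℝ) - 1) := by
    have hIchi : Integrable (fun ω => chiSqStat n k p X ω) P :=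
      integrable_finset_sum _ (fun i _ => hIg1 i)
    have hIS2 : Integrable (fun ω => S2stat n k p X ω) P :=
      integrable_finset_sum _ (fun i _ => hIg2 i)
    rw [show (fun ω => S1stat n k p X ω) = fun ω => chiSqStat n k p X ω - S2stat n k p X ω
      from rfl]
    rw [integral_sub hIchi hIS2, hEchi, hES2]
    rw [Finset.sum_add_distrib, Finset.sum_add_distrib]
    have hc : ∑ i ∈ Finset.Icc 1 k, (1 + p i - 2 * p' i) = (k:ℝ) - 1 := by
      have hcard : (Finset.Icc 1 k).card = k := by
        rw [Nat.card_Icc]; omega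
      rw [Finset.sum_sub_distrib, Finset.sum_add_distrib, hp_sum, ← Finset.mul_sum, hp'_sum,
        Finset.sum_const, hcard, nsmul_eq_mul, mul_one]
      ring
    rw [hc]
    rw [Finset.sum_congr rfl (fun i _ => mul_div_assoc ((n:ℝ) - 1) ((p' i - p i) ^ 2) (p i)),
      ← Finset.mul_sum]
    ring
  refine ⟨by rw [hES1]; ring, hES2, ?_⟩
  intro hpp
  have hzero1 : ∑ i ∈ Finset.Icc 1 k, (p' i - p i) ^ 2 / p i = 0 :=
    Finset.sum_eq_zero fun i hi => by rw [hpp i hi]; simp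
  have hzero2 : ∑ i ∈ Finset.Icc 1 k, (p' i - p i) / p i = 0 :=
    Finset.sum_eq_zero fun i hi => by rw [hpp i hi]; simp
  constructor
  · rw [hES1, hzero1]; ring
  · rw [hES2, hzero2]
end

section
/- Under the null hypothesis P(X_j = i) = p_i, the statistic S_{n1} satisfies E[S_{n1}] = k − 1 and Var(S_{n1}) = 2(k − 1)(n − 1)/n. -/
open MeasureTheory ProbabilityTheory Finset

set_option linter.unusedSectionVars false
set_option linter.unusedVariables false
section Aux

variable {Ω : Type*} [MeasurableSpace Ω]

/-- indicator of `X j = i` as a real. -/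
noncomputable def Bf (X : ℕ → Ω → ℕ) (j i : ℕ) (ω : Ω) : ℝ := if X j ω = i then 1 else 0

noncomputable def gf (k : ℕ) (p : ℕ → ℝ) (X : ℕ → Ω → ℕ) (a b : ℕ) (ω : Ω) : ℝ :=
  ∑ i ∈ Icc 1 k, Bf X a i ω * Bf X b i ω / p i

lemma Bf_nonneg (X : ℕ → Ω → ℕ) (j i : ℕ) (ω : Ω) : 0 ≤ Bf X j i ω := by
  unfold Bf; split_ifs <;> norm_num

lemma Bf_le_one (X : ℕ → Ω → ℕ) (j i : ℕ) (ω : Ω) : Bf X j i ω ≤ 1 := by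
  unfold Bf; split_ifs <;> norm_num

lemma Bf_sq (X : ℕ → Ω → ℕ) (j i : ℕ) (ω : Ω) : Bf X j i ω * Bf X j i ω = Bf X j i ω := by
  unfold Bf; split_ifs <;> norm_num

lemma Bf_meas {X : ℕ → Ω → ℕ} (hX : ∀ j, Measurable (X j)) (j i : ℕ) :
    Measurable (Bf X j i) := by
  unfold Bf
  exact Measurable.ite (hX j (measurableSet_singleton i)) measurable_const measurable_const

/-- product of indicators over a finset equals the indicator of the intersection. -/
lemma prod_Bf_eq_indicator (X : ℕ → Ω → ℕ) (s : Finset ℕ) (v : ℕ → ℕ) :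
    (fun ω => ∏ m ∈ s, Bf X m (v m) ω)
      = Set.indicator (⋂ m ∈ s, {ω | X m ω = v m}) (1 : Ω → ℝ) := by
  funext ω
  by_cases h : ∀ m ∈ s, X m ω = v m
  · rw [Set.indicator_of_mem (by simpa [Set.mem_iInter] using h)]
    rw [Pi.one_apply]
    exact Finset.prod_eq_one fun m hm => by simp [Bf, h m hm]
  · push_neg at h
    obtain ⟨m, hm, hne⟩ := h
    rw [Set.indicator_of_notMem (by simp [Set.mem_iInter]; exact ⟨m, hm, hne⟩)]
    exact Finset.prod_eq_zero hm (by simp [Bf, hne])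

lemma iInter_Bf_meas {X : ℕ → Ω → ℕ} (hX : ∀ j, Measurable (X j)) (s : Finset ℕ) (v : ℕ → ℕ) :
    MeasurableSet (⋂ m ∈ s, {ω | X m ω = v m}) :=
  MeasurableSet.biInter s.countable_toSet fun m _ => hX m (measurableSet_singleton (v m))

lemma integrable_prod_Bf (P : Measure Ω) [IsProbabilityMeasure P]
    {X : ℕ → Ω → ℕ} (hX : ∀ j, Measurable (X j)) (s : Finset ℕ) (v : ℕ → ℕ) :
    Integrable (fun ω => ∏ m ∈ s, Bf X m (v m) ω) P := by
  rw [prod_Bf_eq_indicator]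
  exact (integrable_const (1:ℝ)).indicator (iInter_Bf_meas hX s v)

lemma master (P : Measure Ω) [IsProbabilityMeasure P] (n k : ℕ) (p : ℕ → ℝ)
    (hp_pos : ∀ i ∈ Finset.Icc 1 k, 0 < p i)
    {X : ℕ → Ω → ℕ} (hX_meas : ∀ j, Measurable (X j))
    (hX_indep : iIndepFun (m := fun _ : Fin n => (inferInstance : MeasurableSpace ℕ))
      (fun j : Fin n => X j.1) P)
    (hX_dist : ∀ j < n, ∀ i ∈ Finset.Icc 1 k,
      P {ω | X j ω = i} = ENNReal.ofReal (p i))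
    (s : Finset ℕ) (hs : ∀ m ∈ s, m < n) (v : ℕ → ℕ) (hv : ∀ m ∈ s, v m ∈ Icc 1 k) :
    ∫ ω, ∏ m ∈ s, Bf X m (v m) ω ∂P = ∏ m ∈ s, p (v m) := by
  rw [prod_Bf_eq_indicator, integral_indicator_one (iInter_Bf_meas hX_meas s v)]
  have hmeasA : P (⋂ m ∈ s, {ω | X m ω = v m}) = ∏ m ∈ s, ENNReal.ofReal (p (v m)) := by
    have hind := hX_indep.measure_inter_preimage_eq_mul (s.attachFin hs)
      (sets := fun i : Fin n => ({v i.1} : Set ℕ)) (fun i _ => measurableSet_singleton _)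
    have hset : (⋂ i ∈ s.attachFin hs, (X i.1) ⁻¹' {v i.1})
        = ⋂ m ∈ s, {ω | X m ω = v m} := by
      ext ω
      simp only [Set.mem_iInter, Finset.mem_attachFin, Set.mem_preimage,
        Set.mem_singleton_iff, Set.mem_setOf_eq]
      exact ⟨fun h m hm => h ⟨m, hs m hm⟩ hm, fun h i hi => h i.1 hi⟩
    rw [hset] at hind
    rw [hind]
    refine Finset.prod_bij' (fun (x : Fin n) _ => x.1) (fun m hm => ⟨m, hs m hm⟩) ?_ ?_ ?_ ?_ ?_
    · intro x hx; simpa [Finset.mem_attachFin] using hx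
    · intro m hm; simpa [Finset.mem_attachFin] using hm
    · intro x hx; rfl
    · intro m hm; rfl
    · intro x hx
      have hx' : x.1 ∈ s := by simpa [Finset.mem_attachFin] using hx
      have : (X x.1) ⁻¹' {v x.1} = {ω | X x.1 ω = v x.1} := rfl
      rw [this, hX_dist x.1 x.2 (v x.1) (hv x.1 hx')]
  rw [measureReal_def, hmeasA, ENNReal.toReal_prod]
  exact Finset.prod_congr rfl fun m hm =>
    ENNReal.toReal_ofReal (le_of_lt (hp_pos (v m) (hv m hm)))


lemma Bf_cases (X : ℕ → Ω → ℕ) (j i : ℕ) (ω : Ω) : Bf X j i ω = 0 ∨ Bf X j i ω = 1 := by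
  unfold Bf; split_ifs <;> simp

lemma integrable_of_bdd {P : Measure Ω} [IsProbabilityMeasure P] {h : Ω → ℝ} {C : ℝ}
    (hm : Measurable h) (hb : ∀ ω, |h ω| ≤ C) : Integrable h P :=
  memLp_one_iff_integrable.mp (MemLp.of_bound hm.aestronglyMeasurable C
    (Filter.Eventually.of_forall fun ω => by simpa [Real.norm_eq_abs] using hb ω))

section withX
variable (P : Measure Ω) [IsProbabilityMeasure P] (n k : ℕ) (p : ℕ → ℝ) {X : ℕ → Ω → ℕ}
  (hp_pos : ∀ i ∈ Finset.Icc 1 k, 0 < p i)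
  (hX_meas : ∀ j, Measurable (X j))
  (hX_indep : iIndepFun (m := fun _ : Fin n => (inferInstance : MeasurableSpace ℕ))
      (fun j : Fin n => X j.1) P)
  (hX_dist : ∀ j < n, ∀ i ∈ Finset.Icc 1 k, P {ω | X j ω = i} = ENNReal.ofReal (p i))

include hX_meas in
lemma integrable_BB (a i b i' : ℕ) : Integrable (fun ω => Bf X a i ω * Bf X b i' ω) P :=
  integrable_of_bdd (C := 1) ((Bf_meas hX_meas a i).mul (Bf_meas hX_meas b i')) (fun ω => by
    rcases Bf_cases X a i ω with h|h <;> rcases Bf_cases X b i' ω with h'|h' <;>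
      simp [h, h'])

include hX_meas in
include hX_meas in
lemma integrable_BBB (a i b i' c i'' : ℕ) :
    Integrable (fun ω => Bf X a i ω * Bf X b i' ω * Bf X c i'' ω) P :=
  integrable_of_bdd (C := 1) (((Bf_meas hX_meas a i).mul (Bf_meas hX_meas b i')).mul
    (Bf_meas hX_meas c i'')) (fun ω => by
    rcases Bf_cases X a i ω with h|h <;> rcases Bf_cases X b i' ω with h'|h' <;>
      rcases Bf_cases X c i'' ω with h''|h'' <;> simp [h, h', h''])

include hX_meas in
include hX_meas in
lemma integrable_BBBB (a i b i' c i'' d i''' : ℕ) :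
    Integrable (fun ω => Bf X a i ω * Bf X b i' ω * (Bf X c i'' ω * Bf X d i''' ω)) P :=
  integrable_of_bdd (C := 1) ((((Bf_meas hX_meas a i).mul (Bf_meas hX_meas b i')).mul
    ((Bf_meas hX_meas c i'').mul (Bf_meas hX_meas d i'''))) ) (fun ω => by
    rcases Bf_cases X a i ω with h|h <;> rcases Bf_cases X b i' ω with h'|h' <;>
      rcases Bf_cases X c i'' ω with h1|h1 <;> rcases Bf_cases X d i''' ω with h2|h2 <;>
      simp [h, h', h1, h2])

include hp_pos hX_meas hX_indep hX_dist in
lemma int_BB {a b : ℕ} (hab : a ≠ b) (ha : a < n) (hb : b < n)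
    {i i' : ℕ} (hi : i ∈ Icc 1 k) (hi' : i' ∈ Icc 1 k) :
    ∫ ω, Bf X a i ω * Bf X b i' ω ∂P = p i * p i' := by
  have h := master P n k p hp_pos hX_meas hX_indep hX_dist {a, b}
    (by simp only [mem_insert, mem_singleton]; rintro m (rfl|rfl) <;> assumption)
    (fun m => if m = a then i else i')
    (by simp only [mem_insert, mem_singleton]; rintro m (rfl|rfl) <;> simp [hab.symm, hi, hi'])
  have e1 : (if a = a then i else i') = i := if_pos rfl
  have e2 : (if b = a then i else i') = i' := if_neg (fun h => hab h.symm)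
  simp only [Finset.prod_pair hab, e1, e2] at h
  exact h

include hp_pos hX_meas hX_indep hX_dist in
lemma int_BBB {a b c : ℕ} (hab : a ≠ b) (hac : a ≠ c) (hbc : b ≠ c)
    (ha : a < n) (hb : b < n) (hc : c < n) {i : ℕ} (hi : i ∈ Icc 1 k) :
    ∫ ω, Bf X a i ω * Bf X b i ω * Bf X c i ω ∂P = p i * p i * p i := by
  have h := master P n k p hp_pos hX_meas hX_indep hX_dist {a, b, c}
    (by simp only [mem_insert, mem_singleton]; rintro m (rfl|rfl|rfl) <;> assumption)
    (fun _ => i)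
    (by intro m _; exact hi)
  have hna : a ∉ ({b, c} : Finset ℕ) := by simp [hab, hac]
  have hnb : b ∉ ({c} : Finset ℕ) := by simp [hbc]
  simp only [Finset.prod_insert hna, Finset.prod_insert hnb, Finset.prod_singleton] at h
  rw [show (fun ω => Bf X a i ω * Bf X b i ω * Bf X c i ω)
      = fun ω => Bf X a i ω * (Bf X b i ω * Bf X c i ω) from funext fun ω => by ring,
    h]
  ring

include hp_pos hX_meas hX_indep hX_dist in
lemma int_BBBB {a b c d : ℕ} (hab : a ≠ b) (hac : a ≠ c) (had : a ≠ d)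
    (hbc : b ≠ c) (hbd : b ≠ d) (hcd : c ≠ d)
    (ha : a < n) (hb : b < n) (hc : c < n) (hd : d < n)
    {i i' : ℕ} (hi : i ∈ Icc 1 k) (hi' : i' ∈ Icc 1 k) :
    ∫ ω, Bf X a i ω * Bf X b i ω * (Bf X c i' ω * Bf X d i' ω) ∂P
      = p i * p i * (p i' * p i') := by
  have h := master P n k p hp_pos hX_meas hX_indep hX_dist {a, b, c, d}
    (by simp only [mem_insert, mem_singleton]; rintro m (rfl|rfl|rfl|rfl) <;> assumption)
    (fun m => if m = a ∨ m = b then i else i')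
    (by simp only [mem_insert, mem_singleton]; rintro m (rfl|rfl|rfl|rfl) <;>
      simp [hi, hi', hac.symm, hbc.symm, had.symm, hbd.symm])
  have hna : a ∉ ({b, c, d} : Finset ℕ) := by simp [hab, hac, had]
  have hnb : b ∉ ({c, d} : Finset ℕ) := by simp [hbc, hbd]
  have hnc : c ∉ ({d} : Finset ℕ) := by simp [hcd]
  have ea : (if a = a ∨ a = b then i else i') = i := by simp
  have eb : (if b = a ∨ b = b then i else i') = i := by simp
  have ec : (if c = a ∨ c = b then i else i') = i' := by simp [hac.symm, hbc.symm]
  have ed : (if d = a ∨ d = b then i else i') = i' := by simp [had.symm, hbd.symm]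
  simp only [Finset.prod_insert hna, Finset.prod_insert hnb, Finset.prod_insert hnc,
    Finset.prod_singleton, ea, eb, ec, ed, eq_self_iff_true, true_or, or_true, if_true] at h
  rw [show (fun ω => Bf X a i ω * Bf X b i ω * (Bf X c i' ω * Bf X d i' ω))
      = fun ω => Bf X a i ω * (Bf X b i ω * (Bf X c i' ω * Bf X d i' ω))
      from funext fun ω => by ring, h]
  ring


omit [IsProbabilityMeasure P] in
lemma gf_comm (a b : ℕ) : gf (Ω := Ω) k p X a b = gf k p X b a :=
  funext fun ω => Finset.sum_congr rfl fun i _ => by rw [mul_comm (Bf X a i ω)]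

include hX_meas in
lemma gf_meas (a b : ℕ) : Measurable (gf k p X a b) := by
  unfold gf
  exact Finset.measurable_sum _ fun i _ =>
    ((Bf_meas hX_meas a i).mul (Bf_meas hX_meas b i)).div_const _

include hp_pos in
lemma gf_nonneg (a b : ℕ) (ω : Ω) : 0 ≤ gf k p X a b ω :=
  Finset.sum_nonneg fun i hi => div_nonneg
    (mul_nonneg (by rcases Bf_cases X a i ω with h|h <;> simp [h])
      (by rcases Bf_cases X b i ω with h|h <;> simp [h])) (hp_pos i hi).le

include hp_pos in
lemma gf_le (a b : ℕ) (ω : Ω) : gf k p X a b ω ≤ ∑ i ∈ Icc 1 k, 1 / p i :=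
  Finset.sum_le_sum fun i hi => by
    apply (div_le_div_iff_of_pos_right (hp_pos i hi)).mpr
    rcases Bf_cases X a i ω with h|h <;> rcases Bf_cases X b i ω with h'|h' <;>
      simp [h, h']

include hp_pos hX_meas in
lemma integrable_gf_mul (a b c d : ℕ) :
    Integrable (fun ω => gf k p X a b ω * gf k p X c d ω) P := by
  set C : ℝ := ∑ i ∈ Icc 1 k, 1 / p i with hC
  have hC0 : 0 ≤ C := Finset.sum_nonneg fun i hi => one_div_nonneg.mpr (hp_pos i hi).le
  refine integrable_of_bdd (C := C * C)
    ((gf_meas k p hX_meas a b).mul (gf_meas k p hX_meas c d)) (fun ω => ?_)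
  rw [abs_of_nonneg (mul_nonneg (gf_nonneg k p hp_pos a b ω) (gf_nonneg k p hp_pos c d ω))]
  exact mul_le_mul (gf_le k p hp_pos a b ω) (gf_le k p hp_pos c d ω)
    (gf_nonneg k p hp_pos c d ω) hC0

include hp_pos hX_meas in
lemma integrable_gf (a b : ℕ) : Integrable (gf k p X a b) P := by
  set C : ℝ := ∑ i ∈ Icc 1 k, 1 / p i with hC
  refine integrable_of_bdd (C := C) (gf_meas k p hX_meas a b) (fun ω => ?_)
  rw [abs_of_nonneg (gf_nonneg k p hp_pos a b ω)]
  exact gf_le k p hp_pos a b ω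

omit [IsProbabilityMeasure P] in
lemma gf_mul_gf_left (a b c : ℕ) (ω : Ω) :
    gf k p X a b ω * gf k p X a c ω
      = ∑ i ∈ Icc 1 k, Bf X a i ω * Bf X b i ω * Bf X c i ω / (p i * p i) := by
  unfold gf
  rw [Finset.sum_mul_sum]
  refine Finset.sum_congr rfl fun i hi => ?_
  rw [Finset.sum_eq_single i]
  · unfold Bf; split_ifs <;> ring
  · intro i' _ hne
    have h0 : Bf X a i ω * Bf X a i' ω = 0 := by
      unfold Bf; split_ifs with h1 h2 <;> simp_all
    have : Bf X a i ω * Bf X b i ω / p i * (Bf X a i' ω * Bf X c i' ω / p i')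
        = Bf X a i ω * Bf X a i' ω * (Bf X b i ω * Bf X c i' ω) / (p i * p i') := by ring
    rw [this, h0]; simp
  · intro h; exact absurd hi h


include hp_pos hX_meas hX_indep hX_dist in
lemma int_g {a b : ℕ} (hab : a ≠ b) (ha : a < n) (hb : b < n)
    (hp_sum : ∑ i ∈ Finset.Icc 1 k, p i = 1) :
    ∫ ω, gf k p X a b ω ∂P = 1 := by
  unfold gf
  rw [integral_finset_sum _ (fun i hi =>
    (integrable_BB P hX_meas a i b i).div_const _)]
  rw [← hp_sum]
  refine Finset.sum_congr rfl fun i hi => ?_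
  rw [integral_div, int_BB P n k p hp_pos hX_meas hX_indep hX_dist hab ha hb hi hi]
  field_simp

include hp_pos hX_meas hX_indep hX_dist in
lemma int_gg_same {a b : ℕ} (hab : a ≠ b) (ha : a < n) (hb : b < n) :
    ∫ ω, gf k p X a b ω * gf k p X a b ω ∂P = (k : ℝ) := by
  have hpt : (fun ω => gf k p X a b ω * gf k p X a b ω)
      = fun ω => ∑ i ∈ Icc 1 k, Bf X a i ω * Bf X b i ω / (p i * p i) := by
    funext ω
    rw [gf_mul_gf_left]
    exact Finset.sum_congr rfl fun i _ => by rw [mul_assoc, Bf_sq]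
  rw [hpt, integral_finset_sum _ (fun i hi =>
    (integrable_BB P hX_meas a i b i).div_const _)]
  have : ∀ i ∈ Icc 1 k, (∫ ω, Bf X a i ω * Bf X b i ω / (p i * p i) ∂P) = 1 := by
    intro i hi
    rw [integral_div, int_BB P n k p hp_pos hX_meas hX_indep hX_dist hab ha hb hi hi]
    exact div_self (ne_of_gt (mul_pos (hp_pos i hi) (hp_pos i hi)))
  rw [Finset.sum_congr rfl this, Finset.sum_const, Nat.card_Icc]
  simp

include hp_pos hX_meas hX_indep hX_dist in
lemma int_gg_shared {a b c : ℕ} (hab : a ≠ b) (hac : a ≠ c) (hbc : b ≠ c)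
    (ha : a < n) (hb : b < n) (hc : c < n)
    (hp_sum : ∑ i ∈ Finset.Icc 1 k, p i = 1) :
    ∫ ω, gf k p X a b ω * gf k p X a c ω ∂P = 1 := by
  have hpt : (fun ω => gf k p X a b ω * gf k p X a c ω)
      = fun ω => ∑ i ∈ Icc 1 k, Bf X a i ω * Bf X b i ω * Bf X c i ω / (p i * p i) :=
    funext fun ω => gf_mul_gf_left k p a b c ω
  rw [hpt, integral_finset_sum _ (fun i hi =>
    (integrable_BBB P hX_meas a i b i c i).div_const _)]
  rw [← hp_sum]
  refine Finset.sum_congr rfl fun i hi => ?_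
  rw [integral_div, int_BBB P n k p hp_pos hX_meas hX_indep hX_dist hab hac hbc ha hb hc hi]
  have := hp_pos i hi
  field_simp

include hp_pos hX_meas hX_indep hX_dist in
lemma int_gg_disj {a b c d : ℕ} (hab : a ≠ b) (hac : a ≠ c) (had : a ≠ d)
    (hbc : b ≠ c) (hbd : b ≠ d) (hcd : c ≠ d)
    (ha : a < n) (hb : b < n) (hc : c < n) (hd : d < n)
    (hp_sum : ∑ i ∈ Finset.Icc 1 k, p i = 1) :
    ∫ ω, gf k p X a b ω * gf k p X c d ω ∂P = 1 := by
  have hpt : (fun ω => gf k p X a b ω * gf k p X c d ω)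
      = fun ω => ∑ i ∈ Icc 1 k, ∑ i' ∈ Icc 1 k,
          Bf X a i ω * Bf X b i ω * (Bf X c i' ω * Bf X d i' ω) / (p i * p i') := by
    funext ω
    unfold gf
    rw [Finset.sum_mul_sum]
    exact Finset.sum_congr rfl fun i _ => Finset.sum_congr rfl fun i' _ => by ring
  rw [hpt, integral_finset_sum _ (fun i hi => integrable_finset_sum _ (fun i' hi' =>
    (integrable_BBBB P hX_meas a i b i c i' d i').div_const _))]
  have hterm : ∀ i ∈ Icc 1 k, (∫ ω, ∑ i' ∈ Icc 1 k,
      Bf X a i ω * Bf X b i ω * (Bf X c i' ω * Bf X d i' ω) / (p i * p i') ∂P)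
      = p i := by
    intro i hi
    rw [integral_finset_sum _ (fun i' hi' =>
      (integrable_BBBB P hX_meas a i b i c i' d i').div_const _)]
    have : ∀ i' ∈ Icc 1 k, (∫ ω,
        Bf X a i ω * Bf X b i ω * (Bf X c i' ω * Bf X d i' ω) / (p i * p i') ∂P)
        = p i * p i' := by
      intro i' hi'
      rw [integral_div,
        int_BBBB P n k p hp_pos hX_meas hX_indep hX_dist hab hac had hbc hbd hcd
          ha hb hc hd hi hi']
      have h1 := hp_pos i hi
      have h2 := hp_pos i' hi'
      field_simp
    rw [Finset.sum_congr rfl this, ← Finset.mul_sum, hp_sum, mul_one]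
  rw [Finset.sum_congr rfl hterm, hp_sum]


include hp_pos hX_meas hX_indep hX_dist in
lemma int_gg_case {a b c d : ℕ} (hab : a ≠ b) (hcd : c ≠ d)
    (ha : a < n) (hb : b < n) (hc : c < n) (hd : d < n)
    (hp_sum : ∑ i ∈ Finset.Icc 1 k, p i = 1) :
    ∫ ω, gf k p X a b ω * gf k p X c d ω ∂P
      = if (c = a ∧ d = b) ∨ (c = b ∧ d = a) then (k : ℝ) else 1 := by
  by_cases h1 : c = a ∧ d = b
  · obtain ⟨rfl, rfl⟩ := h1
    rw [if_pos (Or.inl ⟨rfl, rfl⟩)]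
    exact int_gg_same P n k p hp_pos hX_meas hX_indep hX_dist hab ha hb
  by_cases h2 : c = b ∧ d = a
  · rw [if_pos (Or.inr h2)]
    simp only [h2.1, h2.2, gf_comm k p b a]
    exact int_gg_same P n k p hp_pos hX_meas hX_indep hX_dist hab ha hb
  rw [if_neg (by tauto)]
  by_cases hca : c = a
  · subst hca
    have hdb : d ≠ b := fun h => h1 ⟨rfl, h⟩
    exact int_gg_shared P n k p hp_pos hX_meas hX_indep hX_dist hab hcd
      (Ne.symm hdb) hc hb hd hp_sum
  by_cases hcb : c = b
  · subst hcb
    have hda : d ≠ a := fun h => h2 ⟨rfl, h⟩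
    simp only [gf_comm k p a c]
    exact int_gg_shared P n k p hp_pos hX_meas hX_indep hX_dist (Ne.symm hab) hcd
      (Ne.symm hda) hc ha hd hp_sum
  by_cases hda : d = a
  · subst hda
    simp only [gf_comm k p c d]
    exact int_gg_shared P n k p hp_pos hX_meas hX_indep hX_dist hab (Ne.symm hca)
      (Ne.symm hcb) ha hb hc hp_sum
  by_cases hdb : d = b
  · subst hdb
    simp only [gf_comm k p a d, gf_comm k p c d]
    exact int_gg_shared P n k p hp_pos hX_meas hX_indep hX_dist (Ne.symm hab)
      (Ne.symm hcb) (Ne.symm hca) hb ha hc hp_sum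
  · exact int_gg_disj P n k p hp_pos hX_meas hX_indep hX_dist hab (Ne.symm hca)
      (Ne.symm hda) (Ne.symm hcb) (Ne.symm hdb) hcd ha hb hc hd hp_sum

end withX

lemma S1_repr (n k : ℕ) (hn : 1 ≤ n) (p : ℕ → ℝ)
    (hp_pos : ∀ i ∈ Finset.Icc 1 k, 0 < p i)
    (hp_sum : ∑ i ∈ Finset.Icc 1 k, p i = 1)
    (X : ℕ → Ω → ℕ) (hX_range : ∀ j < n, ∀ ω, X j ω ∈ Finset.Icc 1 k) (ω : Ω) :
    S1stat n k p X ω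
      = ((k : ℝ) - n) + (1 / n) * ∑ q ∈ (range n).offDiag, gf k p X q.1 q.2 ω := by
  have hn0 : (n : ℝ) ≠ 0 := Nat.cast_ne_zero.mpr (by omega)
  have hobs : ∀ i, obsCount n X i ω = ∑ j ∈ range n, Bf X j i ω := by
    intro i
    unfold obsCount Bf
    rw [Finset.card_filter]
    push_cast
    rfl
  have hsum_o : ∑ i ∈ Icc 1 k, obsCount n X i ω = n := by
    simp_rw [hobs]
    rw [Finset.sum_comm]
    have h1 : ∀ j ∈ range n, ∑ i ∈ Icc 1 k, Bf X j i ω = 1 := by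
      intro j hj
      unfold Bf
      rw [Finset.sum_ite_eq (Icc 1 k) (X j ω) (fun _ => (1:ℝ))]
      simp [hX_range j (mem_range.mp hj) ω]
    rw [Finset.sum_congr rfl h1, Finset.sum_const, card_range]
    simp
  have hsq : ∀ i, obsCount n X i ω ^ 2 - obsCount n X i ω
      = ∑ q ∈ (range n).offDiag, Bf X q.1 i ω * Bf X q.2 i ω := by
    intro i
    have h1 : obsCount n X i ω ^ 2
        = ∑ q ∈ (range n) ×ˢ (range n), Bf X q.1 i ω * Bf X q.2 i ω := by
      rw [hobs, sq, Finset.sum_mul_sum, ← Finset.sum_product']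
    have h2 : ∑ q ∈ (range n) ×ˢ (range n), Bf X q.1 i ω * Bf X q.2 i ω
        = ∑ q ∈ (range n).diag, Bf X q.1 i ω * Bf X q.2 i ω
          + ∑ q ∈ (range n).offDiag, Bf X q.1 i ω * Bf X q.2 i ω := by
      rw [← Finset.diag_union_offDiag, Finset.sum_union (Finset.disjoint_diag_offDiag _)]
    have h3 : ∑ q ∈ (range n).diag, Bf X q.1 i ω * Bf X q.2 i ω = obsCount n X i ω := by
      rw [hobs]
      refine Finset.sum_bij' (fun q _ => q.1) (fun j _ => (j, j)) ?_ ?_ ?_ ?_ ?_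
      · intro q hq; exact (Finset.mem_diag.mp hq).1
      · intro j hj; exact Finset.mem_diag.mpr ⟨hj, rfl⟩
      · intro q hq
        have := (Finset.mem_diag.mp hq).2
        exact Prod.ext rfl this
      · intro j hj; rfl
      · intro q hq
        have h := (Finset.mem_diag.mp hq).2
        rw [← h, Bf_sq]
    rw [h1, h2, h3]; ring
  unfold S1stat chiSqStat S2stat
  rw [← Finset.sum_sub_distrib]
  have hterm : ∀ i ∈ Icc 1 k,
      (obsCount n X i ω - n * p i) ^ 2 / (n * p i) - (obsCount n X i ω - n * p i) / (n * p i)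
      = (obsCount n X i ω ^ 2 - obsCount n X i ω) / (n * p i)
        - 2 * obsCount n X i ω + (n * p i + 1) := by
    intro i hi
    have hp := hp_pos i hi
    field_simp
    ring
  rw [Finset.sum_congr rfl hterm]
  rw [Finset.sum_add_distrib, Finset.sum_sub_distrib, Finset.sum_add_distrib,
    ← Finset.mul_sum, ← Finset.mul_sum, hsum_o, hp_sum, Finset.sum_const, Nat.card_Icc]
  have hmain : ∑ i ∈ Icc 1 k, (obsCount n X i ω ^ 2 - obsCount n X i ω) / (n * p i)
      = (1 / n) * ∑ q ∈ (range n).offDiag, gf k p X q.1 q.2 ω := by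
    have h4 : ∀ i ∈ Icc 1 k, (obsCount n X i ω ^ 2 - obsCount n X i ω) / (n * p i)
        = ∑ q ∈ (range n).offDiag, Bf X q.1 i ω * Bf X q.2 i ω / (n * p i) := by
      intro i hi
      rw [hsq i, Finset.sum_div]
    rw [Finset.sum_congr rfl h4, Finset.sum_comm, Finset.mul_sum]
    refine Finset.sum_congr rfl fun q hq => ?_
    unfold gf
    rw [Finset.mul_sum]
    refine Finset.sum_congr rfl fun i hi => ?_
    have hp := hp_pos i hi
    field_simp
  rw [hmain]
  push_cast [Nat.add_sub_cancel]
  ring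

end Aux

theorem S1_mean_variance_null
    {Ω : Type*} [MeasurableSpace Ω] (P : Measure Ω) [IsProbabilityMeasure P]
    (n k : ℕ) (hn : 1 ≤ n) (hk : 2 ≤ k)
    (p : ℕ → ℝ)
    (hp_pos : ∀ i ∈ Finset.Icc 1 k, 0 < p i)
    (hp_sum : ∑ i ∈ Finset.Icc 1 k, p i = 1)
    (X : ℕ → Ω → ℕ)
    (hX_meas : ∀ j, Measurable (X j))
    (hX_range : ∀ j < n, ∀ ω, X j ω ∈ Finset.Icc 1 k)
    (hX_indep : iIndepFun (m := fun _ : Fin n => (inferInstance : MeasurableSpace ℕ))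
      (fun j : Fin n => X j.1) P)
    (hX_dist : ∀ j < n, ∀ i ∈ Finset.Icc 1 k,
      P {ω | X j ω = i} = ENNReal.ofReal (p i)) :
    (∫ ω, S1stat n k p X ω ∂P) = (k : ℝ) - 1 ∧
    variance (S1stat n k p X) P = 2 * ((k : ℝ) - 1) * ((n : ℝ) - 1) / (n : ℝ) := by
  have hn0 : (n : ℝ) ≠ 0 := Nat.cast_ne_zero.mpr (by omega)
  set t := (range n).offDiag with ht
  set G : Ω → ℝ := fun ω => ∑ q ∈ t, gf k p X q.1 q.2 ω with hGdef
  have hrepr : S1stat n k p X = fun ω => ((k : ℝ) - n) + (1 / n) * G ω :=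
    funext fun ω => S1_repr n k hn p hp_pos hp_sum X hX_range ω
  have hqf : ∀ q ∈ t, q.1 ≠ q.2 ∧ q.1 < n ∧ q.2 < n := by
    intro q hq
    rw [ht, Finset.mem_offDiag] at hq
    exact ⟨hq.2.2, mem_range.mp hq.1, mem_range.mp hq.2.1⟩
  have hIntg : ∀ a b, Integrable (gf k p X a b) P :=
    fun a b => integrable_gf P k p hp_pos hX_meas a b
  have hIntgg : ∀ a b c d, Integrable (fun ω => gf k p X a b ω * gf k p X c d ω) P :=
    fun a b c d => integrable_gf_mul P k p hp_pos hX_meas a b c d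
  have hIntG : Integrable G P := integrable_finset_sum _ fun q _ => hIntg q.1 q.2
  have hcard : (t.card : ℝ) = (n : ℝ) ^ 2 - n := by
    have hle : n ≤ n * n := Nat.le_mul_of_pos_left n (by omega)
    rw [ht, Finset.offDiag_card, card_range, Nat.cast_sub hle, Nat.cast_mul]
    ring
  have hEG : ∫ ω, G ω ∂P = (n : ℝ) ^ 2 - n := by
    rw [hGdef, integral_finset_sum _ fun q _ => hIntg q.1 q.2]
    have h1 : ∀ q ∈ t, (∫ ω, gf k p X q.1 q.2 ω ∂P) = 1 := fun q hq =>
      int_g P n k p hp_pos hX_meas hX_indep hX_dist (hqf q hq).1 (hqf q hq).2.1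
        (hqf q hq).2.2 hp_sum
    rw [Finset.sum_congr rfl h1, Finset.sum_const, nsmul_eq_mul, mul_one, hcard]
  have hES1 : (∫ ω, S1stat n k p X ω ∂P) = (k : ℝ) - 1 := by
    rw [hrepr, integral_add (integrable_const _) (hIntG.const_mul _), integral_const,
      integral_const_mul, hEG]
    simp only [probReal_univ, measure_univ, ENNReal.toReal_one, smul_eq_mul, one_mul]
    field_simp
    ring
  refine ⟨hES1, ?_⟩
  -- second moment of G
  have hIntGG : Integrable (fun ω => G ω * G ω) P := by
    have : (fun ω => G ω * G ω)
        = fun ω => ∑ q ∈ t, ∑ q' ∈ t, gf k p X q.1 q.2 ω * gf k p X q'.1 q'.2 ω := by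
      funext ω
      rw [hGdef, Finset.sum_mul_sum]
    rw [this]
    exact integrable_finset_sum _ fun q _ => integrable_finset_sum _ fun q' _ =>
      hIntgg q.1 q.2 q'.1 q'.2
  have hEG2 : ∫ ω, G ω * G ω ∂P
      = ((n : ℝ) ^ 2 - n) * (((n : ℝ) ^ 2 - n) + 2 * k - 2) := by
    have h0 : (fun ω => G ω * G ω)
        = fun ω => ∑ q ∈ t, ∑ q' ∈ t, gf k p X q.1 q.2 ω * gf k p X q'.1 q'.2 ω := by
      funext ω
      rw [hGdef, Finset.sum_mul_sum]
    rw [h0, integral_finset_sum _ fun q _ => integrable_finset_sum _ fun q' _ =>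
      hIntgg q.1 q.2 q'.1 q'.2]
    have h1 : ∀ q ∈ t, (∫ ω, ∑ q' ∈ t, gf k p X q.1 q.2 ω * gf k p X q'.1 q'.2 ω ∂P)
        = (t.card : ℝ) + 2 * ((k : ℝ) - 1) := by
      intro q hq
      obtain ⟨hq12, hq1, hq2⟩ := hqf q hq
      rw [integral_finset_sum _ fun q' _ => hIntgg q.1 q.2 q'.1 q'.2]
      have h2 : ∀ q' ∈ t, (∫ ω, gf k p X q.1 q.2 ω * gf k p X q'.1 q'.2 ω ∂P)
          = if q' = q ∨ q' = (q.2, q.1) then (k : ℝ) else 1 := by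
        intro q' hq'
        obtain ⟨hq12', hq1', hq2'⟩ := hqf q' hq'
        rw [int_gg_case P n k p hp_pos hX_meas hX_indep hX_dist hq12 hq12'
          hq1 hq2 hq1' hq2' hp_sum]
        congr 1
        simp [Prod.ext_iff]
      rw [Finset.sum_congr rfl h2]
      have h3 : ∀ q' ∈ t, (if q' = q ∨ q' = (q.2, q.1) then (k : ℝ) else 1)
          = 1 + (if q' = q ∨ q' = (q.2, q.1) then (k : ℝ) - 1 else 0) := by
        intro q' _
        split_ifs <;> ring
      rw [Finset.sum_congr rfl h3, Finset.sum_add_distrib, Finset.sum_const,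
        nsmul_eq_mul, mul_one, ← Finset.sum_filter]
      have hsq_mem : (q.2, q.1) ∈ t := by
        rw [ht, Finset.mem_offDiag]
        exact ⟨mem_range.mpr hq2, mem_range.mpr hq1, Ne.symm hq12⟩
      have hfil : t.filter (fun q' => q' = q ∨ q' = (q.2, q.1)) = {q, (q.2, q.1)} := by
        ext x
        simp only [Finset.mem_filter, Finset.mem_insert, Finset.mem_singleton]
        constructor
        · rintro ⟨_, h⟩; exact h
        · rintro (rfl | rfl)
          · exact ⟨hq, Or.inl rfl⟩
          · exact ⟨hsq_mem, Or.inr rfl⟩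
      have hne : q ≠ (q.2, q.1) := by
        intro h
        exact hq12 (by rw [Prod.ext_iff] at h; exact h.1)
      rw [hfil, Finset.sum_pair hne]
      ring
    rw [Finset.sum_congr rfl h1, Finset.sum_const, nsmul_eq_mul, hcard]
    ring
  -- Memℒp 2
  have hGmeas : Measurable G := Finset.measurable_sum _ fun q _ => gf_meas k p hX_meas q.1 q.2
  set C : ℝ := ∑ i ∈ Icc 1 k, 1 / p i with hC
  have hMem : MemLp (S1stat n k p X) 2 P := by
    rw [hrepr]
    refine MemLp.of_bound ((measurable_const.add (hGmeas.const_mul _)).aestronglyMeasurable)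
      (|(k : ℝ) - n| + (1 / n) * (t.card * C)) (Filter.Eventually.of_forall fun ω => ?_)
    have hGb : |G ω| ≤ t.card * C := by
      rw [hGdef]
      refine (Finset.abs_sum_le_sum_abs _ _).trans ?_
      have : ∀ q ∈ t, |gf k p X q.1 q.2 ω| ≤ C := by
        intro q _
        rw [abs_of_nonneg (gf_nonneg k p hp_pos q.1 q.2 ω)]
        exact gf_le k p hp_pos q.1 q.2 ω
      calc ∑ q ∈ t, |gf k p X q.1 q.2 ω| ≤ ∑ q ∈ t, C := Finset.sum_le_sum this
        _ = t.card * C := by rw [Finset.sum_const, nsmul_eq_mul]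
    have h1n : (0:ℝ) ≤ 1 / n := by positivity
    calc ‖((k : ℝ) - n) + (1 / n) * G ω‖
        ≤ |(k : ℝ) - n| + |(1 / n) * G ω| := abs_add_le _ _
      _ ≤ |(k : ℝ) - n| + (1 / n) * (t.card * C) := by
          rw [abs_mul, abs_of_nonneg h1n]
          exact add_le_add_right (mul_le_mul_of_nonneg_left hGb h1n) _
  -- variance
  rw [variance_eq_sub hMem, hES1]
  have hsq : (S1stat n k p X) ^ 2
      = fun ω => (((k : ℝ) - n) ^ 2 + (2 * ((k : ℝ) - n) * (1 / n)) * G ω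
          + (1 / n) ^ 2 * (G ω * G ω)) := by
    funext ω
    simp only [Pi.pow_apply, hrepr]
    ring
  rw [hsq,
    integral_add (f := fun ω => ((k : ℝ) - n) ^ 2 + (2 * ((k : ℝ) - n) * (1 / n)) * G ω)
      (g := fun ω => (1 / n : ℝ) ^ 2 * (G ω * G ω))
      ((integrable_const _).add (hIntG.const_mul _)) (hIntGG.const_mul _),
    integral_add (f := fun _ => ((k : ℝ) - n) ^ 2)
      (g := fun ω => (2 * ((k : ℝ) - n) * (1 / n)) * G ω)
      (integrable_const _) (hIntG.const_mul _), integral_const,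
    integral_const_mul, integral_const_mul, hEG, hEG2]
  simp only [probReal_univ, measure_univ, ENNReal.toReal_one, smul_eq_mul, one_mul]
  field_simp
  ring
end

section
/- Define δ_{i,j} = 1{X_j = i} − p_i and Δ_{i,ℓ} = ∑_{j=1}^{ℓ} δ_{i,j}. Then E[ ( ∑_{j=2}^{n} (n − j) ∑_{i=1}^{k} Δ_{i,j−1} δ_{i,j}/p_i )² ] = (k − 1) ∑_{j=2}^{n} (n − j)² (j − 1). -/
open MeasureTheory ProbabilityTheory Finset

/-- `δ_{i,j} = 1{X_j = i} - p_i`, with the draws indexed from `0`, so that the `ℓ`-th draw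
(`1 ≤ ℓ ≤ n`) corresponds to `deltaRV p X i (ℓ - 1)`. -/
noncomputable def deltaRV {Ω : Type*} (p : ℕ → ℝ) (X : ℕ → Ω → ℕ) (i j : ℕ) (ω : Ω) : ℝ :=
  (if X j ω = i then (1 : ℝ) else 0) - p i

/-- `Δ_{i,ℓ} = ∑_{j=1}^{ℓ} δ_{i,j}`: the sum of the `δ`'s over the first `ℓ` draws
(with `Δ_{i,0} = 0`). -/
noncomputable def DeltaRV {Ω : Type*} (p : ℕ → ℝ) (X : ℕ → Ω → ℕ) (i l : ℕ) (ω : Ω) : ℝ :=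
  ∑ j ∈ Finset.range l, deltaRV p X i j ω

/-- the function whose composition with `X j` gives `deltaRV`. -/
noncomputable def dfa (p : ℕ → ℝ) (i : ℕ) (x : ℕ) : ℝ := (if x = i then (1 : ℝ) else 0) - p i

lemma prod_integral_aux {Ω : Type*} [MeasurableSpace Ω] (P : Measure Ω) [IsProbabilityMeasure P]
    {ι : Type*} (Y : ι → Ω → ℝ)
    (hind : iIndepFun Y P)
    (hmeas : ∀ t, Measurable (Y t)) (s : Finset ι) :
    ∫ ω, ∏ t ∈ s, Y t ω ∂P = ∏ t ∈ s, ∫ ω, Y t ω ∂P := by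
  classical
  induction s using Finset.cons_induction with
  | empty => simp
  | cons a s ha ih =>
    rw [Finset.prod_cons]
    have h1 : IndepFun (∏ t ∈ s, Y t) (Y a) P :=
      hind.indepFun_finset_prod_of_notMem hmeas ha
    have hpm : Measurable (∏ t ∈ s, Y t) := by
      rw [show (∏ t ∈ s, Y t) = fun ω => ∏ t ∈ s, Y t ω from funext fun ω => by
        simp [Finset.prod_apply]]
      exact Finset.measurable_prod s (fun t _ => hmeas t)
    have h2 := h1.integral_mul_eq_mul_integral hpm.aestronglyMeasurable (hmeas a).aestronglyMeasurable
    have h3 : (fun ω => ∏ t ∈ Finset.cons a s ha, Y t ω) = (∏ t ∈ s, Y t) * Y a := by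
      funext ω
      simp [Finset.prod_insert ha, Finset.prod_apply, mul_comm]
    rw [show (∫ ω, ∏ t ∈ Finset.cons a s ha, Y t ω ∂P) = ∫ ω, ((∏ t ∈ s, Y t) * Y a) ω ∂P by
      rw [h3], h2, ← ih, mul_comm]
    congr 1
    exact integral_congr_ae (Filter.Eventually.of_forall fun ω => by simp [Finset.prod_apply])

lemma prod_integral_X {Ω : Type*} [MeasurableSpace Ω] (P : Measure Ω) [IsProbabilityMeasure P]
    (n : ℕ) (X : ℕ → Ω → ℕ) (hX_meas : ∀ j, Measurable (X j))
    (hX_indep : iIndepFun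
      (fun j : Fin n => X j.1) P)
    (g : Fin n → ℕ → ℝ) (s : Finset (Fin n)) :
    ∫ ω, ∏ t ∈ s, g t (X t.1 ω) ∂P = ∏ t ∈ s, ∫ ω, g t (X t.1 ω) ∂P :=
  prod_integral_aux P (fun t ω => g t (X t.1 ω))
    (hX_indep.comp g (fun _ => measurable_of_countable _))
    (fun t => (measurable_of_countable (g t)).comp (hX_meas t.1)) s

lemma aux_expand (c c' u u' e e' : ℝ) (f f' : ℕ → ℝ) (s s' : Finset ℕ) :
    (c * ((∑ m ∈ s, f m) * e / u)) * (c' * ((∑ m' ∈ s', f' m') * e' / u')) =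
    ∑ m ∈ s, ∑ m' ∈ s', (c * c' / (u * u')) * (f m * e * f' m' * e') := by
  simp only [div_eq_mul_inv, mul_inv, Finset.sum_mul, Finset.mul_sum]
  rw [Finset.sum_comm]
  exact Finset.sum_congr rfl fun _ _ => Finset.sum_congr rfl fun _ _ => by ring

theorem weighted_martingale_second_moment
    {Ω : Type*} [MeasurableSpace Ω] (P : Measure Ω) [IsProbabilityMeasure P]
    (n k : ℕ) (hn : 2 ≤ n) (hk : 2 ≤ k)
    (p : ℕ → ℝ)
    (hp_pos : ∀ i ∈ Finset.Icc 1 k, 0 < p i)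
    (hp_sum : ∑ i ∈ Finset.Icc 1 k, p i = 1)
    (X : ℕ → Ω → ℕ)
    (hX_meas : ∀ j, Measurable (X j))
    (hX_range : ∀ j < n, ∀ ω, X j ω ∈ Finset.Icc 1 k)
    (hX_indep : iIndepFun
      (fun j : Fin n => X j.1) P)
    (hX_dist : ∀ j < n, ∀ i ∈ Finset.Icc 1 k,
      P {ω | X j ω = i} = ENNReal.ofReal (p i)) :
    ∫ ω, (∑ j ∈ Finset.Icc 2 n, ((n : ℝ) - (j : ℝ)) *
        ∑ i ∈ Finset.Icc 1 k, DeltaRV p X i (j - 1) ω * deltaRV p X i (j - 1) ω / p i) ^ 2 ∂P =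
      ((k : ℝ) - 1) * ∑ j ∈ Finset.Icc 2 n, ((n : ℝ) - (j : ℝ)) ^ 2 * ((j : ℝ) - 1) := by
  classical
  -- measurability and bounds for delta
  have hδm : ∀ i j, Measurable (deltaRV p X i j) := fun i j =>
    (measurable_of_countable (dfa p i)).comp (hX_meas j)
  have hδb : ∀ i j ω, |deltaRV p X i j ω| ≤ 1 + |p i| := by
    intro i j ω
    have h1 : |(if X j ω = i then (1:ℝ) else 0)| ≤ 1 := by split <;> simp
    calc |deltaRV p X i j ω| = |(if X j ω = i then (1:ℝ) else 0) + (- p i)| := by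
          rw [deltaRV, sub_eq_add_neg]
      _ ≤ |(if X j ω = i then (1:ℝ) else 0)| + |p i| := by
          refine (abs_add_le _ _).trans ?_; rw [abs_neg]
      _ ≤ 1 + |p i| := by linarith
  -- integrability of quadruple products
  have hQI : ∀ i i' a b c d, Integrable (fun ω =>
      deltaRV p X i a ω * deltaRV p X i b ω * deltaRV p X i' c ω * deltaRV p X i' d ω) P := by
    intro i i' a b c d
    have hm : Measurable (fun ω =>
        deltaRV p X i a ω * deltaRV p X i b ω * deltaRV p X i' c ω * deltaRV p X i' d ω) :=
      (((hδm i a).mul (hδm i b)).mul (hδm i' c)).mul (hδm i' d)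
    refine Integrable.mono'
      (integrable_const ((1 + |p i|) * (1 + |p i|) * (1 + |p i'|) * (1 + |p i'|)))
      hm.aestronglyMeasurable (Filter.Eventually.of_forall fun ω => ?_)
    rw [Real.norm_eq_abs, abs_mul, abs_mul, abs_mul]
    have n1 : (0:ℝ) ≤ 1 + |p i| := by positivity
    have n2 : (0:ℝ) ≤ 1 + |p i'| := by positivity
    gcongr <;> [exact hδb i a ω; exact hδb i b ω; exact hδb i' c ω; exact hδb i' d ω]
  -- indicator integrals
  have hms : ∀ i j, MeasurableSet {ω | X j ω = i} := fun i j =>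
    hX_meas j (measurableSet_singleton i)
  have hIint : ∀ i j, Integrable (fun ω => if X j ω = i then (1:ℝ) else 0) P := by
    intro i j
    have h : (fun ω => if X j ω = i then (1:ℝ) else 0)
        = Set.indicator {ω | X j ω = i} (fun _ => 1) := by
      funext ω; simp [Set.indicator_apply]
    rw [h]; exact (integrable_const 1).indicator (hms i j)
  have hIval : ∀ j < n, ∀ i ∈ Finset.Icc 1 k,
      ∫ ω, (if X j ω = i then (1:ℝ) else 0) ∂P = p i := by
    intro j hj i hi
    have h : (fun ω => if X j ω = i then (1:ℝ) else 0)
        = Set.indicator {ω | X j ω = i} (1 : Ω → ℝ) := by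
      funext ω; simp [Set.indicator_apply]
    rw [h, integral_indicator_one (hms i j), measureReal_def, hX_dist j hj i hi,
      ENNReal.toReal_ofReal (hp_pos i hi).le]
  -- first moment of delta
  have hE0 : ∀ j < n, ∀ i ∈ Finset.Icc 1 k, ∫ ω, deltaRV p X i j ω ∂P = 0 := by
    intro j hj i hi
    have h : (fun ω => deltaRV p X i j ω)
        = fun ω => (if X j ω = i then (1:ℝ) else 0) - p i := rfl
    rw [h, integral_sub (hIint i j) (integrable_const _), hIval j hj i hi, integral_const]
    simp
  -- second moments of delta at a single index
  have hE2 : ∀ j < n, ∀ i ∈ Finset.Icc 1 k, ∀ i' ∈ Finset.Icc 1 k,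
      ∫ ω, deltaRV p X i j ω * deltaRV p X i' j ω ∂P
        = (if i = i' then p i else 0) - p i * p i' := by
    intro j hj i hi i' hi'
    have hpt : (fun ω => deltaRV p X i j ω * deltaRV p X i' j ω) =
        fun ω => (if i = i' then (if X j ω = i then (1:ℝ) else 0) else 0) +
          ((- p i') * (if X j ω = i then (1:ℝ) else 0) +
           ((- p i) * (if X j ω = i' then (1:ℝ) else 0) + p i * p i')) := by
      funext ω
      by_cases hii : i = i'
      · subst hii; by_cases h1 : X j ω = i <;> simp [deltaRV, h1] <;> try ring
      · have hii' : i' ≠ i := fun h => hii h.symm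
        by_cases h1 : X j ω = i <;> by_cases h2 : X j ω = i'
        · exact absurd (h1.symm.trans h2) hii
        all_goals simp [deltaRV, h1, h2, hii, hii'] <;> try ring
    have hIF : Integrable
        (fun ω => if i = i' then (if X j ω = i then (1:ℝ) else 0) else 0) P := by
      by_cases hii : i = i'
      · simpa [hii] using hIint i j
      · simp [hii]
    have hIFval : ∫ ω, (if i = i' then (if X j ω = i then (1:ℝ) else 0) else 0) ∂P
        = if i = i' then p i else 0 := by
      by_cases hii : i = i' <;> simp [hii, hIval j hj i' hi']
    have I1 : Integrable (fun ω => (- p i') * (if X j ω = i then (1:ℝ) else 0)) P :=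
      (hIint i j).const_mul _
    have I2 : Integrable (fun ω => (- p i) * (if X j ω = i' then (1:ℝ) else 0)) P :=
      (hIint i' j).const_mul _
    have I3 : Integrable (fun _ : Ω => p i * p i') P := integrable_const _
    have I23 : Integrable
        (fun ω => (- p i) * (if X j ω = i' then (1:ℝ) else 0) + p i * p i') P := I2.add I3
    have I123 : Integrable (fun ω => (- p i') * (if X j ω = i then (1:ℝ) else 0) +
        ((- p i) * (if X j ω = i' then (1:ℝ) else 0) + p i * p i')) P := I1.add I23
    rw [hpt, integral_add hIF I123, integral_add I1 I23, integral_add I2 I3,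
      integral_const_mul, integral_const_mul, hIval j hj i hi, hIval j hj i' hi',
      integral_const, hIFval]
    simp
    ring
  -- fourth moments via independence
  have hQ : ∀ i ∈ Finset.Icc 1 k, ∀ i' ∈ Finset.Icc 1 k, ∀ m b m' d : ℕ,
      m < b → b < n → m' < d → d < n →
      ∫ ω, deltaRV p X i m ω * deltaRV p X i b ω * deltaRV p X i' m' ω * deltaRV p X i' d ω ∂P
        = if b = d ∧ m = m' then ((if i = i' then p i else 0) - p i * p i') ^ 2 else 0 := by
    intro i hi i' hi' m b m' d hmb hbn hmd hdn
    set a1 : Fin n := ⟨m, lt_trans hmb hbn⟩ with ha1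
    set a2 : Fin n := ⟨b, hbn⟩ with ha2
    set a3 : Fin n := ⟨m', lt_trans hmd hdn⟩ with ha3
    set a4 : Fin n := ⟨d, hdn⟩ with ha4
    have hv1 : (a1 : ℕ) = m := rfl
    have hv2 : (a2 : ℕ) = b := rfl
    have hv3 : (a3 : ℕ) = m' := rfl
    have hv4 : (a4 : ℕ) = d := rfl
    set g : Fin n → ℕ → ℝ := fun t x =>
      (if t = a1 then dfa p i x else 1) * (if t = a2 then dfa p i x else 1) *
      (if t = a3 then dfa p i' x else 1) * (if t = a4 then dfa p i' x else 1) with hg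
    have hprod : ∀ ω, ∏ t ∈ Finset.univ, g t (X t.1 ω) =
        deltaRV p X i m ω * deltaRV p X i b ω * deltaRV p X i' m' ω * deltaRV p X i' d ω := by
      intro ω
      simp only [hg, Finset.prod_mul_distrib, Finset.prod_ite_eq', Finset.mem_univ, if_true]
      simp [hv1, hv2, hv3, hv4, deltaRV, dfa]
    have hint : ∫ ω, deltaRV p X i m ω * deltaRV p X i b ω * deltaRV p X i' m' ω *
        deltaRV p X i' d ω ∂P = ∏ t ∈ Finset.univ, ∫ ω, g t (X t.1 ω) ∂P := by
      rw [← prod_integral_X P n X hX_meas hX_indep g Finset.univ]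
      exact integral_congr_ae (Filter.Eventually.of_forall fun ω => (hprod ω).symm)
    rcases Nat.lt_trichotomy b d with hbd | hbd | hbd
    · -- b < d : factor at a4 has zero mean
      rw [hint, if_neg (fun h => absurd h.1 (by omega))]
      apply Finset.prod_eq_zero (Finset.mem_univ a4)
      have e1 : a4 ≠ a1 := Fin.ne_of_val_ne (by omega)
      have e2 : a4 ≠ a2 := Fin.ne_of_val_ne (by omega)
      have e3 : a4 ≠ a3 := Fin.ne_of_val_ne (by omega)
      have hg4 : (fun ω => g a4 (X a4.1 ω)) = fun ω => deltaRV p X i' d ω := by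
        funext ω
        simp [hg, e1, e2, e3, hv4, deltaRV, dfa]
      rw [hg4, hE0 d hdn i' hi']
    · -- b = d
      by_cases hmm : m = m'
      · -- diagonal : product of two second moments
        have e13 : a1 = a3 := Fin.val_injective (by simpa [hv1, hv3] using hmm)
        have e24 : a2 = a4 := Fin.val_injective (by simpa [hv2, hv4] using hbd)
        have e12 : a1 ≠ a2 := Fin.ne_of_val_ne (by omega)
        have e14 : a1 ≠ a4 := Fin.ne_of_val_ne (by omega)
        have e21 : a2 ≠ a1 := Fin.ne_of_val_ne (by omega)
        have e23 : a2 ≠ a3 := Fin.ne_of_val_ne (by omega)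
        rw [hint, if_pos ⟨hbd, hmm⟩]
        rw [← Finset.prod_subset (Finset.subset_univ ({a1, a2} : Finset (Fin n)))
          (fun t _ ht => ?_)]
        · rw [Finset.prod_pair e12]
          have hw1 : (fun ω => g a1 (X a1.1 ω)) =
              fun ω => deltaRV p X i m ω * deltaRV p X i' m ω := by
            funext ω
            have e32 : a3 ≠ a2 := e13 ▸ e12
            have e34 : a3 ≠ a4 := e13 ▸ e14
            simp [hg, e12, e13, e14, e32, e34, hv1, hv3, ← hmm, deltaRV, dfa]
          have hw2 : (fun ω => g a2 (X a2.1 ω)) =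
              fun ω => deltaRV p X i b ω * deltaRV p X i' b ω := by
            funext ω
            have e41 : a4 ≠ a1 := e24 ▸ e21
            have e43 : a4 ≠ a3 := e24 ▸ e23
            simp [hg, e21, e23, e24, e41, e43, hv2, hv4, ← hbd, deltaRV, dfa]
          rw [hw1, hw2, hE2 m (lt_trans hmb hbn) i hi i' hi', hE2 b hbn i hi i' hi', sq]
        · -- factors outside {a1, a2} are constant 1
          have f1 : t ≠ a1 := fun h => ht (by simp [h])
          have f2 : t ≠ a2 := fun h => ht (by simp [h])
          have f3 : t ≠ a3 := fun h => ht (by rw [h, ← e13]; simp)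
          have f4 : t ≠ a4 := fun h => ht (by rw [h, ← e24]; simp)
          have hone : (fun ω => g t (X t.1 ω)) = fun _ => (1:ℝ) := by
            funext ω
            simp [hg, f1, f2, f3, f4]
          rw [hone, integral_const]
          simp
      · -- b = d, m ≠ m' : factor at a1 has zero mean
        rw [hint, if_neg (fun h => hmm h.2)]
        apply Finset.prod_eq_zero (Finset.mem_univ a1)
        have e2 : a1 ≠ a2 := Fin.ne_of_val_ne (by omega)
        have e3 : a1 ≠ a3 := Fin.ne_of_val_ne (by simpa [hv1, hv3] using hmm)
        have e4 : a1 ≠ a4 := Fin.ne_of_val_ne (by omega)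
        have hg1 : (fun ω => g a1 (X a1.1 ω)) = fun ω => deltaRV p X i m ω := by
          funext ω
          simp [hg, e2, e3, e4, hv1, deltaRV, dfa]
        rw [hg1, hE0 m (lt_trans hmb hbn) i hi]
    · -- d < b : factor at a2 has zero mean
      rw [hint, if_neg (fun h => absurd h.1 (by omega))]
      apply Finset.prod_eq_zero (Finset.mem_univ a2)
      have e1 : a2 ≠ a1 := Fin.ne_of_val_ne (by omega)
      have e3 : a2 ≠ a3 := Fin.ne_of_val_ne (by omega)
      have e4 : a2 ≠ a4 := Fin.ne_of_val_ne (by omega)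
      have hg2 : (fun ω => g a2 (X a2.1 ω)) = fun ω => deltaRV p X i b ω := by
        funext ω
        simp [hg, e1, e3, e4, hv2, deltaRV, dfa]
      rw [hg2, hE0 b hbn i hi]
  -- key combinatorial sum
  have hKey : ∑ i ∈ Finset.Icc 1 k, ∑ i' ∈ Finset.Icc 1 k,
      ((if i = i' then p i else 0) - p i * p i') ^ 2 / (p i * p i') = (k : ℝ) - 1 := by
    have hinner : ∀ i ∈ Finset.Icc 1 k, ∑ i' ∈ Finset.Icc 1 k,
        ((if i = i' then p i else 0) - p i * p i') ^ 2 / (p i * p i') = 1 - p i := by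
      intro i hi
      have hpi := hp_pos i hi
      rw [← Finset.add_sum_erase _ _ hi]
      have h1 : ((if i = i then p i else 0) - p i * p i) ^ 2 / (p i * p i) = (1 - p i) ^ 2 := by
        rw [if_pos rfl]
        field_simp
      have h2 : ∀ i' ∈ (Finset.Icc 1 k).erase i,
          ((if i = i' then p i else 0) - p i * p i') ^ 2 / (p i * p i') = p i * p i' := by
        intro i' hi'
        have hne : i ≠ i' := fun h => (Finset.ne_of_mem_erase hi') h.symm
        have hpi' := hp_pos i' (Finset.mem_of_mem_erase hi')
        rw [if_neg hne, zero_sub, neg_sq, sq, mul_div_assoc,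
          div_self (by positivity : p i * p i' ≠ 0), mul_one]
      rw [h1, Finset.sum_congr rfl h2, ← Finset.mul_sum,
        Finset.sum_erase_eq_sub hi, hp_sum]
      ring
    rw [Finset.sum_congr rfl hinner, Finset.sum_sub_distrib, hp_sum, Finset.sum_const,
      Nat.card_Icc]
    simp
  -- pointwise expansion of the square
  have hF : ∀ ω : Ω, (∑ j ∈ Finset.Icc 2 n, ((n : ℝ) - (j : ℝ)) *
        ∑ i ∈ Finset.Icc 1 k, DeltaRV p X i (j - 1) ω * deltaRV p X i (j - 1) ω / p i) ^ 2
      = ∑ j ∈ Finset.Icc 2 n, ∑ j' ∈ Finset.Icc 2 n, ∑ i ∈ Finset.Icc 1 k,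
          ∑ i' ∈ Finset.Icc 1 k, ∑ m ∈ Finset.range (j - 1), ∑ m' ∈ Finset.range (j' - 1),
          (((n : ℝ) - (j : ℝ)) * ((n : ℝ) - (j' : ℝ)) / (p i * p i')) *
          (deltaRV p X i m ω * deltaRV p X i (j - 1) ω * deltaRV p X i' m' ω *
            deltaRV p X i' (j' - 1) ω) := by
    intro ω
    rw [sq, Finset.sum_mul_sum]
    refine Finset.sum_congr rfl fun j hj => Finset.sum_congr rfl fun j' hj' => ?_
    rw [Finset.mul_sum, Finset.mul_sum, Finset.sum_mul_sum]
    refine Finset.sum_congr rfl fun i hi => Finset.sum_congr rfl fun i' hi' => ?_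
    simp only [DeltaRV]
    exact aux_expand _ _ _ _ _ _ _ _ _ _
  -- move the integral inside all the sums
  have hpush : ∫ ω, (∑ j ∈ Finset.Icc 2 n, ∑ j' ∈ Finset.Icc 2 n, ∑ i ∈ Finset.Icc 1 k,
          ∑ i' ∈ Finset.Icc 1 k, ∑ m ∈ Finset.range (j - 1), ∑ m' ∈ Finset.range (j' - 1),
          (((n : ℝ) - (j : ℝ)) * ((n : ℝ) - (j' : ℝ)) / (p i * p i')) *
          (deltaRV p X i m ω * deltaRV p X i (j - 1) ω * deltaRV p X i' m' ω *
            deltaRV p X i' (j' - 1) ω)) ∂P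
      = ∑ j ∈ Finset.Icc 2 n, ∑ j' ∈ Finset.Icc 2 n, ∑ i ∈ Finset.Icc 1 k,
          ∑ i' ∈ Finset.Icc 1 k, ∑ m ∈ Finset.range (j - 1), ∑ m' ∈ Finset.range (j' - 1),
          ∫ ω, (((n : ℝ) - (j : ℝ)) * ((n : ℝ) - (j' : ℝ)) / (p i * p i')) *
          (deltaRV p X i m ω * deltaRV p X i (j - 1) ω * deltaRV p X i' m' ω *
            deltaRV p X i' (j' - 1) ω) ∂P := by
    rw [integral_finset_sum _ (fun j _ => integrable_finset_sum _ (fun j' _ =>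
      integrable_finset_sum _ (fun i _ => integrable_finset_sum _ (fun i' _ =>
      integrable_finset_sum _ (fun m _ => integrable_finset_sum _ (fun m' _ =>
      (hQI i i' m (j - 1) m' (j' - 1)).const_mul _))))))]
    refine Finset.sum_congr rfl fun j _ => ?_
    rw [integral_finset_sum _ (fun j' _ => integrable_finset_sum _ (fun i _ =>
      integrable_finset_sum _ (fun i' _ => integrable_finset_sum _ (fun m _ =>
      integrable_finset_sum _ (fun m' _ =>
      (hQI i i' m (j - 1) m' (j' - 1)).const_mul _)))))]
    refine Finset.sum_congr rfl fun j' _ => ?_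
    rw [integral_finset_sum _ (fun i _ => integrable_finset_sum _ (fun i' _ =>
      integrable_finset_sum _ (fun m _ => integrable_finset_sum _ (fun m' _ =>
      (hQI i i' m (j - 1) m' (j' - 1)).const_mul _))))]
    refine Finset.sum_congr rfl fun i _ => ?_
    rw [integral_finset_sum _ (fun i' _ => integrable_finset_sum _ (fun m _ =>
      integrable_finset_sum _ (fun m' _ =>
      (hQI i i' m (j - 1) m' (j' - 1)).const_mul _)))]
    refine Finset.sum_congr rfl fun i' _ => ?_
    rw [integral_finset_sum _ (fun m _ => integrable_finset_sum _ (fun m' _ =>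
      (hQI i i' m (j - 1) m' (j' - 1)).const_mul _))]
    refine Finset.sum_congr rfl fun m _ => ?_
    rw [integral_finset_sum _ (fun m' _ => (hQI i i' m (j - 1) m' (j' - 1)).const_mul _)]
  simp only [hF]
  rw [hpush, Finset.mul_sum]
  refine Finset.sum_congr rfl fun j hj => ?_
  have hjA := Finset.mem_Icc.mp hj
  have hjn : j - 1 < n := by omega
  have hper : ∀ j' ∈ Finset.Icc 2 n, (∑ i ∈ Finset.Icc 1 k,
      ∑ i' ∈ Finset.Icc 1 k, ∑ m ∈ Finset.range (j - 1), ∑ m' ∈ Finset.range (j' - 1),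
      ∫ ω, (((n : ℝ) - (j : ℝ)) * ((n : ℝ) - (j' : ℝ)) / (p i * p i')) *
      (deltaRV p X i m ω * deltaRV p X i (j - 1) ω * deltaRV p X i' m' ω *
        deltaRV p X i' (j' - 1) ω) ∂P)
      = if j' = j then ((k : ℝ) - 1) * (((n : ℝ) - (j : ℝ)) ^ 2 * ((j : ℝ) - 1)) else 0 := by
    intro j' hj'
    have hj'A := Finset.mem_Icc.mp hj'
    have hj'n : j' - 1 < n := by omega
    by_cases hjj : j' = j
    · subst hjj
      rw [if_pos rfl]
      have hcol : ∀ i ∈ Finset.Icc 1 k, ∀ i' ∈ Finset.Icc 1 k,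
          (∑ m ∈ Finset.range (j' - 1), ∑ m' ∈ Finset.range (j' - 1),
            ∫ ω, (((n : ℝ) - (j' : ℝ)) * ((n : ℝ) - (j' : ℝ)) / (p i * p i')) *
              (deltaRV p X i m ω * deltaRV p X i (j' - 1) ω * deltaRV p X i' m' ω *
                deltaRV p X i' (j' - 1) ω) ∂P)
          = (((j' : ℝ) - 1) * (((n : ℝ) - (j' : ℝ)) * ((n : ℝ) - (j' : ℝ)))) *
              ((((if i = i' then p i else 0) - p i * p i') ^ 2) / (p i * p i')) := by
        intro i hi i' hi'
        have hstep : ∀ m ∈ Finset.range (j' - 1),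
            (∑ m' ∈ Finset.range (j' - 1),
              ∫ ω, (((n : ℝ) - (j' : ℝ)) * ((n : ℝ) - (j' : ℝ)) / (p i * p i')) *
                (deltaRV p X i m ω * deltaRV p X i (j' - 1) ω * deltaRV p X i' m' ω *
                  deltaRV p X i' (j' - 1) ω) ∂P)
            = (((n : ℝ) - (j' : ℝ)) * ((n : ℝ) - (j' : ℝ)) / (p i * p i')) *
                ((if i = i' then p i else 0) - p i * p i') ^ 2 := by
          intro m hm
          have hin : ∀ m' ∈ Finset.range (j' - 1),
              ∫ ω, (((n : ℝ) - (j' : ℝ)) * ((n : ℝ) - (j' : ℝ)) / (p i * p i')) *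
                (deltaRV p X i m ω * deltaRV p X i (j' - 1) ω * deltaRV p X i' m' ω *
                  deltaRV p X i' (j' - 1) ω) ∂P
              = if m' = m then (((n : ℝ) - (j' : ℝ)) * ((n : ℝ) - (j' : ℝ)) / (p i * p i')) *
                  ((if i = i' then p i else 0) - p i * p i') ^ 2 else 0 := by
            intro m' hm'
            rw [integral_const_mul, hQ i hi i' hi' m (j' - 1) m' (j' - 1)
              (Finset.mem_range.mp hm) hj'n (Finset.mem_range.mp hm') hj'n]
            by_cases hmm : m' = m
            · simp [hmm]
            · have hand : ¬(j' - 1 = j' - 1 ∧ m = m') := fun h => hmm h.2.symm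
              rw [if_neg hand, if_neg hmm, mul_zero]
          rw [Finset.sum_congr rfl hin, Finset.sum_ite_eq' (Finset.range (j' - 1)) m,
            if_pos hm]
        rw [Finset.sum_congr rfl hstep, Finset.sum_const, Finset.card_range, nsmul_eq_mul]
        have hcast : ((j' - 1 : ℕ) : ℝ) = (j' : ℝ) - 1 := by
          push_cast [Nat.cast_sub (by omega : 1 ≤ j')]
          ring
        rw [hcast]
        ring
      rw [Finset.sum_congr rfl (fun i hi => Finset.sum_congr rfl (fun i' hi' =>
        hcol i hi i' hi'))]
      simp only [← Finset.mul_sum]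
      rw [hKey]
      ring
    · rw [if_neg hjj]
      refine Finset.sum_eq_zero fun i hi => Finset.sum_eq_zero fun i' hi' =>
        Finset.sum_eq_zero fun m hm => Finset.sum_eq_zero fun m' hm' => ?_
      rw [integral_const_mul, hQ i hi i' hi' m (j - 1) m' (j' - 1)
        (Finset.mem_range.mp hm) hjn (Finset.mem_range.mp hm') hj'n]
      have hand : ¬(j - 1 = j' - 1 ∧ m = m') := fun h => hjj (by omega)
      rw [if_neg hand, mul_zero]
  rw [Finset.sum_congr rfl hper, Finset.sum_ite_eq' (Finset.Icc 2 n) j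
    (fun _ => ((k : ℝ) - 1) * (((n : ℝ) - (j : ℝ)) ^ 2 * ((j : ℝ) - 1))), if_pos hj]
end

section
/- Let X be a random variable with P(X = i) = p_i for 1 ≤ i ≤ k, let c_1,…,c_k be nonnegative reals with ∑_{i=1}^{k} c_i = k, and set y = ∑_{i=1}^{k} c_i 1{X = i}/p_i − k and β_j = ∑_{i=1}^{k} c_i^{j+1}/p_i^{j} − k^{j+1} for j ≥ 1. Then E[y⁴] = β₃ − 4k β₂ + 6k² β₁; in particular, since β₂ ≥ 0, E[y⁴] ≤ β₃ + 6k² β₁. -/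
open MeasureTheory ProbabilityTheory Finset

theorem y_fourth_moment
    {Ω : Type*} [MeasurableSpace Ω] (P : Measure Ω) [IsProbabilityMeasure P]
    (k : ℕ) (hk : 2 ≤ k)
    (p c : ℕ → ℝ)
    (hp_pos : ∀ i ∈ Finset.Icc 1 k, 0 < p i)
    (hp_sum : ∑ i ∈ Finset.Icc 1 k, p i = 1)
    (hc_nonneg : ∀ i ∈ Finset.Icc 1 k, 0 ≤ c i)
    (hc_sum : ∑ i ∈ Finset.Icc 1 k, c i = (k : ℝ))
    (X : Ω → ℕ)
    (hX_meas : Measurable X)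
    (hX_range : ∀ ω, X ω ∈ Finset.Icc 1 k)
    (hX_dist : ∀ i ∈ Finset.Icc 1 k, P {ω | X ω = i} = ENNReal.ofReal (p i)) :
    (∫ ω, (∑ i ∈ Finset.Icc 1 k,
          c i * (if X ω = i then (1 : ℝ) else 0) / p i - (k : ℝ)) ^ 4 ∂P) =
        (∑ i ∈ Finset.Icc 1 k, c i ^ 4 / p i ^ 3 - (k : ℝ) ^ 4) -
          4 * (k : ℝ) * (∑ i ∈ Finset.Icc 1 k, c i ^ 3 / p i ^ 2 - (k : ℝ) ^ 3) +
          6 * (k : ℝ) ^ 2 * (∑ i ∈ Finset.Icc 1 k, c i ^ 2 / p i - (k : ℝ) ^ 2) ∧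
    (∫ ω, (∑ i ∈ Finset.Icc 1 k,
          c i * (if X ω = i then (1 : ℝ) else 0) / p i - (k : ℝ)) ^ 4 ∂P) ≤
        (∑ i ∈ Finset.Icc 1 k, c i ^ 4 / p i ^ 3 - (k : ℝ) ^ 4) +
          6 * (k : ℝ) ^ 2 * (∑ i ∈ Finset.Icc 1 k, c i ^ 2 / p i - (k : ℝ) ^ 2) := by
  set S := Finset.Icc 1 k with hS
  -- pointwise rewrite of the integrand
  have hpt : ∀ ω, (∑ i ∈ S,
      c i * (if X ω = i then (1 : ℝ) else 0) / p i - (k : ℝ)) ^ 4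
      = ∑ i ∈ S, ({ω' | X ω' = i}.indicator (fun _ => (c i / p i - (k:ℝ)) ^ 4) ω) := by
    intro ω
    have h1 : ∑ i ∈ S, c i * (if X ω = i then (1 : ℝ) else 0) / p i
        = c (X ω) / p (X ω) := by
      rw [Finset.sum_eq_single (X ω)]
      · simp
      · intro b _ hne
        rw [if_neg (Ne.symm hne)]; ring
      · intro h; exact absurd (hX_range ω) h
    have h2 : ∑ i ∈ S, ({ω' | X ω' = i}.indicator (fun _ => (c i / p i - (k:ℝ)) ^ 4) ω)
        = (c (X ω) / p (X ω) - (k:ℝ)) ^ 4 := by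
      rw [Finset.sum_eq_single (X ω)]
      · simp [Set.indicator_apply]
      · intro b _ hne
        simp [Set.indicator_apply, Ne.symm hne]
      · intro h; exact absurd (hX_range ω) h
    rw [h1, h2]
  have hint : ∀ i ∈ S, Integrable
      (fun ω => ({ω' | X ω' = i}.indicator (fun _ => (c i / p i - (k:ℝ)) ^ 4) ω)) P := by
    intro i _
    exact (integrable_const _).indicator (hX_meas (measurableSet_singleton i))
  have hmeasset : ∀ i : ℕ, MeasurableSet {ω | X ω = i} := fun i =>
    hX_meas (measurableSet_singleton i)
  have hintval : (∫ ω, (∑ i ∈ S,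
        c i * (if X ω = i then (1 : ℝ) else 0) / p i - (k : ℝ)) ^ 4 ∂P)
      = ∑ i ∈ S, p i * (c i / p i - (k:ℝ)) ^ 4 := by
    rw [integral_congr_ae (Filter.Eventually.of_forall hpt), integral_finset_sum S hint]
    refine Finset.sum_congr rfl fun i hi => ?_
    rw [integral_indicator_const _ (hmeasset i), measureReal_def, hX_dist i hi,
      ENNReal.toReal_ofReal (hp_pos i hi).le, smul_eq_mul]
  -- algebraic expansion of the sum
  have hexp : ∑ i ∈ S, p i * (c i / p i - (k:ℝ)) ^ 4
      = ∑ i ∈ S, (c i ^ 4 / p i ^ 3 - 4 * k * (c i ^ 3 / p i ^ 2)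
          + 6 * k ^ 2 * (c i ^ 2 / p i) - 4 * (k:ℝ)^3 * c i + (k:ℝ)^4 * p i) := by
    refine Finset.sum_congr rfl fun i hi => ?_
    have hpne : p i ≠ 0 := (hp_pos i hi).ne'
    field_simp
    ring
  have hmain : (∫ ω, (∑ i ∈ S,
        c i * (if X ω = i then (1 : ℝ) else 0) / p i - (k : ℝ)) ^ 4 ∂P)
      = (∑ i ∈ S, c i ^ 4 / p i ^ 3 - (k : ℝ) ^ 4) -
          4 * (k : ℝ) * (∑ i ∈ S, c i ^ 3 / p i ^ 2 - (k : ℝ) ^ 3) +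
          6 * (k : ℝ) ^ 2 * (∑ i ∈ S, c i ^ 2 / p i - (k : ℝ) ^ 2) := by
    rw [hintval, hexp]
    simp only [Finset.sum_sub_distrib, Finset.sum_add_distrib, ← Finset.mul_sum]
    rw [hc_sum, hp_sum]
    ring
  refine ⟨hmain, ?_⟩
  rw [hmain]
  -- suffices: β₂ ≥ 0, i.e. ∑ c_i^3 / p_i^2 ≥ k^3
  have hbeta2 : (k:ℝ)^3 ≤ ∑ i ∈ S, c i ^ 3 / p i ^ 2 := by
    have hk0 : (0:ℝ) < (k:ℝ) := by positivity
    -- Cauchy-Schwarz 1 : k^2 ≤ ∑ c_i^2 / p_i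
    have h1 : ((k:ℝ))^2 ≤ ∑ i ∈ S, c i ^ 2 / p i := by
      have hcs := Finset.sum_mul_sq_le_sq_mul_sq S (fun i => Real.sqrt (p i))
        (fun i => c i / Real.sqrt (p i))
      have heq : ∀ i ∈ S, Real.sqrt (p i) * (c i / Real.sqrt (p i)) = c i := by
        intro i hi
        have : Real.sqrt (p i) ≠ 0 := Real.sqrt_ne_zero'.2 (hp_pos i hi)
        field_simp
      have heq2 : ∀ i ∈ S, Real.sqrt (p i) ^ 2 = p i := fun i hi =>
        Real.sq_sqrt (hp_pos i hi).le
      have heq3 : ∀ i ∈ S, (c i / Real.sqrt (p i)) ^ 2 = c i ^ 2 / p i := by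
        intro i hi
        rw [div_pow, Real.sq_sqrt (hp_pos i hi).le]
      rw [Finset.sum_congr rfl heq, Finset.sum_congr rfl heq2,
        Finset.sum_congr rfl heq3, hc_sum, hp_sum, one_mul] at hcs
      exact hcs
    -- Cauchy-Schwarz 2 : (∑ c_i^2/p_i)^2 ≤ k * ∑ c_i^3 / p_i^2
    have h2 : (∑ i ∈ S, c i ^ 2 / p i) ^ 2 ≤ (k:ℝ) * ∑ i ∈ S, c i ^ 3 / p i ^ 2 := by
      have hcs := Finset.sum_mul_sq_le_sq_mul_sq S (fun i => Real.sqrt (c i))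
        (fun i => c i * Real.sqrt (c i) / p i)
      have heq : ∀ i ∈ S, Real.sqrt (c i) * (c i * Real.sqrt (c i) / p i)
          = c i ^ 2 / p i := by
        intro i hi
        have hpne : p i ≠ 0 := (hp_pos i hi).ne'
        have h := Real.mul_self_sqrt (hc_nonneg i hi)
        field_simp
        linear_combination c i * h
      have heq2 : ∀ i ∈ S, Real.sqrt (c i) ^ 2 = c i := fun i hi =>
        Real.sq_sqrt (hc_nonneg i hi)
      have heq3 : ∀ i ∈ S, (c i * Real.sqrt (c i) / p i) ^ 2 = c i ^ 3 / p i ^ 2 := by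
        intro i hi
        have hpne : p i ≠ 0 := (hp_pos i hi).ne'
        have h := Real.sq_sqrt (hc_nonneg i hi)
        field_simp
        linear_combination c i ^ 2 * h
      rw [Finset.sum_congr rfl heq, Finset.sum_congr rfl heq2,
        Finset.sum_congr rfl heq3, hc_sum] at hcs
      exact hcs
    nlinarith [h1, h2, sq_nonneg ((k:ℝ))]
  nlinarith [hbeta2, sq_nonneg ((k:ℝ))]
end
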